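/- Assume (𝒞, w) satisfies the factorization axiom. Then the pair (F𝒞, lw) satisfies the factorization axiom: every morphism f : x → y of F𝒞 factors as f = p∘i where i : x → u is a monomorphism of F𝒞 (i.e. levelwise a monomorphism) and p : u → y is a level weak equivalence. -/

import Mathlib

open CategoryTheory CategoryTheory.Limits ZeroObject

universe v u

/-- An *admissible class* of morphisms in an abelian category: it contains all
isomorphisms, satisfies the two-out-of-three property, and in any morphism of
short exact sequences, if two of the three vertical morphisms lie in the class
then so does the third. -/
structure AdmissibleClass {C : Type u} [Category.{v} C] [Abelian C]
    (w : MorphismProperty C) : Prop where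
  of_isIso : ∀ {x y : C} (f : x ⟶ y), IsIso f → w f
  comp_mem : ∀ {x y z : C} (f : x ⟶ y) (g : y ⟶ z), w f → w g → w (f ≫ g)
  of_comp_left : ∀ {x y z : C} (f : x ⟶ y) (g : y ⟶ z), w g → w (f ≫ g) → w f
  of_comp_right : ∀ {x y z : C} (f : x ⟶ y) (g : y ⟶ z), w f → w (f ≫ g) → w g
  ses_fst : ∀ {S₁ S₂ : ShortComplex C}, S₁.ShortExact → S₂.ShortExact →
    ∀ (φ : S₁ ⟶ S₂), w φ.τ₂ → w φ.τ₃ → w φ.τ₁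
  ses_snd : ∀ {S₁ S₂ : ShortComplex C}, S₁.ShortExact → S₂.ShortExact →
    ∀ (φ : S₁ ⟶ S₂), w φ.τ₁ → w φ.τ₃ → w φ.τ₂
  ses_trd : ∀ {S₁ S₂ : ShortComplex C}, S₁.ShortExact → S₂.ShortExact →
    ∀ (φ : S₁ ⟶ S₂), w φ.τ₁ → w φ.τ₂ → w φ.τ₃

variable {C : Type u} [Category.{v} C] [Abelian C]

/-- The class `lw` of level weak equivalences in the category `F𝒞 = ℕ ⥤ 𝒞` of
filtered objects: morphisms all of whose components lie in `w`. -/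
def LevelWeq (w : MorphismProperty C) : MorphismProperty (ℕ ⥤ C) :=
  fun _ _ f => ∀ n : ℕ, w (f.app n)

/-- The class `w_st` of stable weak equivalences in `F𝒞 = ℕ ⥤ 𝒞`: morphisms
whose components eventually lie in `w`. -/
def StableWeq (w : MorphismProperty C) : MorphismProperty (ℕ ⥤ C) :=
  fun _ _ f => ∃ N : ℕ, ∀ n : ℕ, N ≤ n → w (f.app n)

/-- A filtered object is *weakly bounded* if its transition maps eventually
lie in `w`. -/
def WeaklyBounded (w : MorphismProperty C) (x : ℕ ⥤ C) : Prop :=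
  ∃ N : ℕ, ∀ n : ℕ, N ≤ n → w (x.map (homOfLE (Nat.le_succ n)))

/-- A filtered object is *bounded* if its transition maps are eventually
isomorphisms. -/
def BoundedFiltered (x : ℕ ⥤ C) : Prop :=
  ∃ b : ℕ, ∀ n : ℕ, b ≤ n → IsIso (x.map (homOfLE (Nat.le_succ n)))

theorem levelWeq_factorizations {w : MorphismProperty C} (hw : AdmissibleClass w)
    (hfac : ∀ {x y : C} (f : x ⟶ y),
      ∃ (u : C) (i : x ⟶ u) (p : u ⟶ y), Mono i ∧ w p ∧ i ≫ p = f) :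
    ∀ {x y : ℕ ⥤ C} (f : x ⟶ y),
      ∃ (u : ℕ ⥤ C) (i : x ⟶ u) (p : u ⟶ y),
        Mono i ∧ LevelWeq w p ∧ i ≫ p = f := by
  intro x y f
  -- data of a factorization at level n
  classical
  let D : ℕ → Type _ := fun n =>
    Σ' (u : C) (i : x.obj n ⟶ u) (p : u ⟶ y.obj n),
      Mono i ∧ w p ∧ i ≫ p = f.app n
  -- initial factorization
  obtain ⟨u0, i0, p0, hm0, hw0, hf0⟩ := hfac (f.app 0)
  -- the step: given data at level n, produce data at level n+1 together with
  -- a transition map satisfying the required compatibilities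
  have step : ∀ (n : ℕ) (d : D n),
      Σ' (d' : D (n+1)) (t : d.1 ⟶ d'.1),
        d.2.1 ≫ t = x.map (homOfLE (Nat.le_succ n)) ≫ d'.2.1 ∧
        t ≫ d'.2.2.1 = d.2.2.1 ≫ y.map (homOfLE (Nat.le_succ n)) := by
    intro n d
    obtain ⟨u, i, p, hm, hwp, hfp⟩ := d
    haveI : Mono i := hm
    let g : x.obj n ⟶ x.obj (n+1) := x.map (homOfLE (Nat.le_succ n))
    let v := pushout i g
    let q : v ⟶ y.obj (n+1) := pushout.desc (p ≫ y.map (homOfLE (Nat.le_succ n)))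
      (f.app (n+1)) (by rw [reassoc_of% hfp]; exact (f.naturality _).symm)
    have hq := hfac q
    set u' := hq.choose with hu'
    have hq2 := hq.choose_spec
    set j := hq2.choose with hj
    have hq3 := hq2.choose_spec
    set p' := hq3.choose with hp'
    have hmj := hq3.choose_spec.1
    have hwp' := hq3.choose_spec.2.1
    have hfj := hq3.choose_spec.2.2
    haveI : Mono j := hmj
    haveI : Mono (pushout.inr i g) := inferInstance
    refine ⟨⟨u', pushout.inr i g ≫ j, p', mono_comp _ _, hwp', ?_⟩,
      pushout.inl i g ≫ j, ?_, ?_⟩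
    · rw [Category.assoc, hfj]; simp [q]; exact pushout.inr_desc _ _ _
    · exact pushout.condition_assoc _
    · rw [Category.assoc, hfj]; simp [q]; exact pushout.inl_desc _ _ _
  -- build the whole sequence of data by recursion
  let data : ∀ n, D n := fun n => Nat.rec ⟨u0, i0, p0, hm0, hw0, hf0⟩
    (fun n d => (step n d).1) n
  have hdata : ∀ n, data (n+1) = (step n (data n)).1 := fun n => rfl
  let t : ∀ n, (data n).1 ⟶ (data (n+1)).1 := fun n => (step n (data n)).2.1
  -- assemble the functor and natural transformations
  let u : ℕ ⥤ C := Functor.ofSequence t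
  let i : x ⟶ u := NatTrans.ofSequence (F := x) (G := u) (fun n => (data n).2.1)
    (by
      intro n
      have := (step n (data n)).2.2.1
      simp only [u, t, Functor.ofSequence_map_homOfLE_succ]; exact this.symm)
  let p : u ⟶ y := NatTrans.ofSequence (F := u) (G := y) (fun n => (data n).2.2.1)
    (by
      intro n
      have := (step n (data n)).2.2.2
      simp only [u, t, Functor.ofSequence_map_homOfLE_succ]; exact this)
  refine ⟨u, i, p, ?_, fun n => (data n).2.2.2.2.1, ?_⟩
  · haveI : ∀ n, Mono (i.app n) := fun n => (data n).2.2.2.1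
    exact NatTrans.mono_of_mono_app i
  · ext n
    exact (data n).2.2.2.2.2
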